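/- Let E be a real normed vector space, let Ω ⊆ E be nonempty with Ω ≠ E, and let φ_Ω be the signed distance function of Ω. Let T : ℝ → ℝ be an odd, strictly increasing function, let η : E → ℝ be an arbitrary function, and let l_s, l_a be real numbers with 0 < l_a ≤ −l_s. Then {x ∈ E | T(φ_Ω(x)) + l_s + l_a·cos(η(x)) ≥ 0} ⊆ closure(Ω). -/

import Mathlib

open Metric Classical

/-- The signed distance function of a set `Ω`: the distance to the frontier of `Ω`,
taken positive inside `Ω` and negative outside. -/
noncomputable def signedDistSet {E : Type*} [NormedAddCommGroup E] [NormedSpace ℝ E]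
    (Ω : Set E) (p : E) : ℝ :=
  if p ∈ Ω then infDist p (frontier Ω) else -infDist p (frontier Ω)

/-- For a nonempty proper subset `Ω` of a real normed vector space,
an odd strictly increasing `T`, an arbitrary `η`, and reals `0 < l_a ≤ -l_s`, the
zero-superlevel set of `x ↦ T (φ_Ω x) + l_s + l_a * cos (η x)` is contained in the
closure of `Ω`. -/
theorem superlevel_subset_closure_of_ogm_cbf {E : Type*} [NormedAddCommGroup E]
    [NormedSpace ℝ E] (Ω : Set E) (hne : Ω.Nonempty) (hproper : Ω ≠ Set.univ)
    (T : ℝ → ℝ) (hT_odd : ∀ y : ℝ, T (-y) = -T y) (hT_mono : StrictMono T)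
    (η : E → ℝ) (l_s l_a : ℝ) (hla_pos : 0 < l_a) (hla_le : l_a ≤ -l_s) :
    {x : E | T (signedDistSet Ω x) + l_s + l_a * Real.cos (η x) ≥ 0} ⊆ closure Ω := by
  -- T 0 = 0
  have hT0 : T 0 = 0 := by have := hT_odd 0; simp at this; linarith
  -- frontier nonempty
  have hfr : (frontier Ω).Nonempty := by
    by_contra h
    rw [Set.not_nonempty_iff_eq_empty] at h
    have hclopen : IsClopen Ω := isClopen_iff_frontier_eq_empty.mpr h
    rcases (isClopen_iff.mp hclopen) with h0 | h1
    · exact hne.ne_empty h0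
    · exact hproper h1
  intro x hx
  simp only [Set.mem_setOf_eq] at hx
  have hcos : Real.cos (η x) ≤ 1 := Real.cos_le_one _
  have hT_nonneg : T (signedDistSet Ω x) ≥ 0 := by nlinarith
  have hφ : signedDistSet Ω x ≥ 0 := by
    by_contra h
    push_neg at h
    have := hT_mono h
    rw [hT0] at this
    linarith
  by_cases hxΩ : x ∈ Ω
  · exact subset_closure hxΩ
  · have hsd : signedDistSet Ω x = -infDist x (frontier Ω) := if_neg hxΩ
    have hd0 : infDist x (frontier Ω) = 0 :=
      le_antisymm (by rw [hsd] at hφ; linarith) (infDist_nonneg)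
    have : x ∈ closure (frontier Ω) := (mem_closure_iff_infDist_zero hfr).2 hd0
    rw [isClosed_frontier.closure_eq] at this
    exact frontier_subset_closure this
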